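/- House-selling problem with one exercise: let X₁, X₂, … be i.i.d. nonnegative random variables with 𝔼(X₁²) < ∞ and 𝔼(X₁) > 0, let α ∈ (0,1), and for x ≥ 0 set X₀ := x. Then there exists a unique x* > 0 satisfying (1−α)/α = 𝔼((X₁/x* − 1)⁺), and the optimal stopping value v(x) := sup over stopping times τ (with respect to the filtration generated by X₀, X₁, X₂, …, with values in ℕ₀ ∪ {∞}, where α^τ X_τ := 0 on {τ = ∞}) of 𝔼(α^τ X_τ) equals (x − x*)⁺ + x*; moreover this value is attained by the stopping time τ* := inf{k ≥ 0 : X_k ≥ x*}. -/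

import Mathlib

open MeasureTheory Set Filter ProbabilityTheory
open scoped ENNReal NNReal

noncomputable section

variable {Ω : Type*} {m0 : MeasurableSpace Ω}

/-- The natural discrete-time filtration `𝓕_k = σ(X₀, …, X_k)` of a sequence `X`. -/
def natFiltration (X : ℕ → Ω → ℝ) (k : ℕ) : MeasurableSpace Ω :=
  ⨆ i ∈ Finset.range (k + 1), MeasurableSpace.comap (X i) inferInstance

/-- `τ : Ω → ℕ ∪ {∞}` is a stopping time for the discrete filtration `F`. -/
def IsStoppingTimeN (F : ℕ → MeasurableSpace Ω) (τ : Ω → ℕ∞) : Prop :=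
  ∀ k : ℕ, MeasurableSet[F k] {ω | τ ω ≤ (k : ℕ∞)}

/-- The discounted reward `α^τ X_τ`, interpreted as `0` on `{τ = ∞}`. -/
def discReward (α : ℝ) (X : ℕ → Ω → ℝ) (τ : Ω → ℕ∞) (ω : Ω) : ℝ :=
  if h : τ ω = ⊤ then 0 else α ^ ((τ ω).untop h) * X ((τ ω).untop h) ω

open scoped Topology

set_option linter.unusedVariables false
set_option linter.unusedSectionVars false

section PartA

variable (μ : Measure Ω) [IsProbabilityMeasure μ]
variable {Y : Ω → ℝ}

lemma integrable_max_sub (hYi : Integrable Y μ) (y : ℝ) :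
    Integrable (fun ω => max (Y ω - y) 0) μ :=
  (hYi.sub (integrable_const y)).sup (integrable_const 0)

/-- the function g y = E (Y - y)⁺ -/
lemma gLipschitz (hYi : Integrable Y μ) :
    LipschitzWith 1 (fun y => ∫ ω, max (Y ω - y) 0 ∂μ) := by
  apply LipschitzWith.of_dist_le_mul
  intro y z
  rw [NNReal.coe_one, one_mul, Real.dist_eq, Real.dist_eq, ← integral_sub (integrable_max_sub μ hYi y)
    (integrable_max_sub μ hYi z)]
  calc |∫ ω, (max (Y ω - y) 0 - max (Y ω - z) 0) ∂μ|
      ≤ ∫ ω, |max (Y ω - y) 0 - max (Y ω - z) 0| ∂μ := by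
        simpa [Real.norm_eq_abs] using
          norm_integral_le_integral_norm (μ := μ) (fun ω => max (Y ω - y) 0 - max (Y ω - z) 0)
    _ ≤ ∫ (_ : Ω), |y - z| ∂μ := by
        apply integral_mono_of_nonneg (Eventually.of_forall fun ω => abs_nonneg _)
          (integrable_const _)
        refine Eventually.of_forall fun ω => ?_
        calc |max (Y ω - y) 0 - max (Y ω - z) 0| ≤ |(Y ω - y) - (Y ω - z)| :=
              abs_max_sub_max_le_abs _ _ _
          _ = |z - y| := by ring_nf
          _ = |y - z| := abs_sub_comm _ _
    _ = |y - z| := by simp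

lemma g_le (hYi : Integrable Y μ) (hYpos : ∀ ω, 0 ≤ Y ω) {y : ℝ} (hy : 0 ≤ y) :
    ∫ ω, max (Y ω - y) 0 ∂μ ≤ ∫ ω, Y ω ∂μ := by
  apply integral_mono (integrable_max_sub μ hYi y) hYi
  intro ω
  exact max_le (by linarith [hYpos ω]) (hYpos ω)

lemma g_ge (hYi : Integrable Y μ) (y : ℝ) :
    (∫ ω, Y ω ∂μ) - y ≤ ∫ ω, max (Y ω - y) 0 ∂μ := by
  have : (∫ ω, Y ω ∂μ) - y = ∫ ω, (Y ω - y) ∂μ := by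
    rw [integral_sub hYi (integrable_const y)]; simp
  rw [this]
  exact integral_mono (hYi.sub (integrable_const y)) (integrable_max_sub μ hYi y) fun ω => le_max_left _ _

lemma g_rescale (hYi : Integrable Y μ) {y : ℝ} (hy : 0 < y) :
    ∫ ω, max (Y ω / y - 1) 0 ∂μ = (∫ ω, max (Y ω - y) 0 ∂μ) / y := by
  rw [div_eq_inv_mul, ← integral_const_mul]
  congr 1; funext ω
  have h : Y ω / y - 1 = (Y ω - y) / y := by field_simp
  rw [mul_max_of_nonneg _ _ (inv_nonneg.mpr hy.le), mul_zero, h, div_eq_inv_mul]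

lemma exists_xstar (hYi : Integrable Y μ) (hYpos : ∀ ω, 0 ≤ Y ω)
    (hmean : 0 < ∫ ω, Y ω ∂μ) {c : ℝ} (hc : 0 < c) :
    ∃ z : ℝ, 0 < z ∧ ∫ ω, max (Y ω - z) 0 ∂μ = c * z := by
  set EY := ∫ ω, Y ω ∂μ with hEY
  set F : ℝ → ℝ := fun y => (∫ ω, max (Y ω - y) 0 ∂μ) - c * y with hF
  have hFc : Continuous F :=
    ((gLipschitz μ hYi).continuous).sub (continuous_const.mul continuous_id)
  set ε : ℝ := EY / (2 * (1 + c)) with hε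
  have hεpos : 0 < ε := by positivity
  set M : ℝ := max (EY / c + 1) ε with hM
  have hεM : ε ≤ M := le_max_right _ _
  have hFε : 0 < F ε := by
    have h1 := g_ge μ hYi ε
    have h2 : (1 + c) * ε = EY / 2 := by
      rw [hε]; field_simp
    simp only [hF]
    nlinarith
  have hFM : F M < 0 := by
    have h1 : ∫ ω, max (Y ω - M) 0 ∂μ ≤ EY :=
      g_le μ hYi hYpos (hεpos.le.trans hεM)
    have h2 : EY / c + 1 ≤ M := le_max_left _ _
    have h3 : EY + c ≤ c * M := by
      have := mul_le_mul_of_nonneg_left h2 hc.le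
      calc EY + c = c * (EY / c + 1) := by field_simp
        _ ≤ c * M := this
    simp only [hF]
    linarith
  have h0 : (0 : ℝ) ∈ Icc (F M) (F ε) := ⟨hFM.le, hFε.le⟩
  obtain ⟨z, hz, hzF⟩ := intermediate_value_Icc' hεM hFc.continuousOn h0
  refine ⟨z, lt_of_lt_of_le hεpos hz.1, ?_⟩
  have : (∫ ω, max (Y ω - z) 0 ∂μ) - c * z = 0 := hzF
  linarith

lemma g_strict (hYi : Integrable Y μ) {y1 y2 : ℝ} (h01 : 0 < y1) (h12 : y1 < y2)
    (hg2 : 0 < ∫ ω, max (Y ω - y2) 0 ∂μ) :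
    (∫ ω, max (Y ω - y2) 0 ∂μ) / y2 < (∫ ω, max (Y ω - y1) 0 ∂μ) / y1 := by
  have h02 : 0 < y2 := h01.trans h12
  have key : ∀ ω, (1/y1 - 1/y2) * max (Y ω - y2) 0 ≤
      (1/y1) * max (Y ω - y1) 0 - (1/y2) * max (Y ω - y2) 0 := by
    intro ω
    have hfac : 0 ≤ 1/y1 - 1/y2 := by
      rw [sub_nonneg]
      exact one_div_le_one_div_of_le h01 h12.le
    rcases le_total (Y ω) y1 with h | h
    · rw [max_eq_right (by linarith), max_eq_right (by linarith)]
      simp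
    · rcases le_total (Y ω) y2 with h2 | h2
      · rw [max_eq_right (by linarith), max_eq_left (by linarith)]
        have : 0 ≤ (1/y1) * (Y ω - y1) := by
          apply mul_nonneg (by positivity); linarith
        linarith
      · rw [max_eq_left (by linarith), max_eq_left (by linarith)]
        have e1 : 0 < 1/y2 := by positivity
        have e2 : (1/y1 - 1/y2) * y2 ≥ 0 := mul_nonneg hfac h02.le
        nlinarith [mul_le_mul_of_nonneg_left (le_refl (Y ω)) hfac]
  have hint : ∫ ω, (1/y1 - 1/y2) * max (Y ω - y2) 0 ∂μ ≤
      ∫ ω, ((1/y1) * max (Y ω - y1) 0 - (1/y2) * max (Y ω - y2) 0) ∂μ := by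
    apply integral_mono
    · exact (integrable_max_sub μ hYi y2).const_mul _
    · exact ((integrable_max_sub μ hYi y1).const_mul _).sub
        ((integrable_max_sub μ hYi y2).const_mul _)
    · exact key
  rw [integral_const_mul] at hint
  rw [integral_sub ((integrable_max_sub μ hYi y1).const_mul _)
    ((integrable_max_sub μ hYi y2).const_mul _), integral_const_mul, integral_const_mul] at hint
  have hfacpos : 0 < 1/y1 - 1/y2 := by
    rw [sub_pos]
    exact one_div_lt_one_div_of_lt h01 h12
  have : 0 < (1/y1 - 1/y2) * ∫ ω, max (Y ω - y2) 0 ∂μ := mul_pos hfacpos hg2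
  rw [div_eq_inv_mul, div_eq_inv_mul, inv_eq_one_div, inv_eq_one_div]
  linarith

end PartA

section PartB

variable {X : ℕ → Ω → ℝ} {μ : Measure Ω}

lemma natFiltration_le (hXm : ∀ i, Measurable (X i)) (k : ℕ) :
    natFiltration X k ≤ m0 :=
  iSup₂_le fun i _ => (hXm i).comap_le

lemma comap_le_natFiltration {i k : ℕ} (h : i ≤ k) :
    MeasurableSpace.comap (X i) inferInstance ≤ natFiltration X k :=
  le_biSup (fun i => MeasurableSpace.comap (X i) (inferInstance : MeasurableSpace ℝ))
    (Finset.mem_range.mpr (Nat.lt_succ_of_le h))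

lemma measurable_natFiltration {i k : ℕ} (h : i ≤ k) :
    Measurable[natFiltration X k] (X i) := fun s hs =>
  comap_le_natFiltration h _ ⟨s, hs, rfl⟩

lemma indep_natFiltration [IsProbabilityMeasure μ] (hXm : ∀ i, Measurable (X i))
    (hX0 : ∃ x : ℝ, ∀ ω, X 0 ω = x)
    (hindep : iIndepFun (fun k => X (k + 1)) μ) (n : ℕ) :
    Indep (natFiltration X n) (MeasurableSpace.comap (X (n + 1)) inferInstance) μ := by
  have h := indep_iSup_of_disjoint (m := fun k => MeasurableSpace.comap (X (k + 1)) inferInstance)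
    (fun i => (hXm (i + 1)).comap_le) hindep.iIndep
    (S := Iio n) (T := {n}) (by simp [Set.disjoint_left]; omega)
  have h2 : MeasurableSpace.comap (X (n + 1)) inferInstance ≤ ⨆ i ∈ ({n} : Set ℕ),
      MeasurableSpace.comap (X (i + 1)) inferInstance :=
    le_biSup (fun i => MeasurableSpace.comap (X (i + 1)) (inferInstance : MeasurableSpace ℝ))
      (mem_singleton n)
  have h1 : natFiltration X n ≤ ⨆ i ∈ Iio n,
      MeasurableSpace.comap (X (i + 1)) inferInstance := by
    apply iSup₂_le
    intro i hi
    rcases Nat.eq_zero_or_pos i with rfl | hpos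
    · obtain ⟨x, hx⟩ := hX0
      have : X 0 = fun _ => x := funext hx
      rw [this, MeasurableSpace.comap_const]
      exact bot_le
    · have : i - 1 < n := by
        simp only [Finset.mem_range] at hi; omega
      have hle := le_biSup (fun i => MeasurableSpace.comap (X (i + 1))
        (inferInstance : MeasurableSpace ℝ)) (mem_Iio.mpr this)
      simpa [Nat.sub_add_cancel hpos] using hle
  rw [Indep_iff] at h ⊢
  intro t1 t2 ht1 ht2
  exact h t1 t2 (h1 _ ht1) (h2 _ ht2)

lemma indepFun_of_indep {m1 m2 : MeasurableSpace Ω} {f g : Ω → ℝ}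
    (h : Indep m1 m2 μ) (hf : Measurable[m1] f) (hg : Measurable[m2] g) :
    IndepFun f g μ := by
  rw [indepFun_iff_measure_inter_preimage_eq_mul]
  intro s t hs ht
  exact (Indep_iff _ _ _).mp h _ _ (hf hs) (hg ht)

end PartB

section STt

variable {X : ℕ → Ω → ℝ} {τ : Ω → ℕ∞} {μ : Measure Ω} {α : ℝ}

lemma ms_le_of_st (hXm : ∀ i, Measurable (X i)) (hτ : IsStoppingTimeN (natFiltration X) τ)
    (k : ℕ) : MeasurableSet {ω | τ ω ≤ (k : ℕ∞)} :=
  natFiltration_le hXm k _ (hτ k)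

/-- the set {τ = k} as a difference of {τ ≤ j} sets -/
lemma eq_set_eq (τ : Ω → ℕ∞) (k : ℕ) :
    {ω | τ ω = (k : ℕ∞)} =
      {ω | τ ω ≤ (k : ℕ∞)} \ ⋃ j ∈ Finset.range k, {ω | τ ω ≤ (j : ℕ∞)} := by
  ext ω
  simp only [mem_setOf_eq, mem_diff, mem_iUnion, Finset.mem_range, not_exists]
  constructor
  · rintro h
    refine ⟨le_of_eq h, fun j hj hle => ?_⟩
    rw [h] at hle
    exact absurd (Nat.cast_le.mp hle) (by omega)
  · rintro ⟨hle, hlt⟩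
    have hne : τ ω ≠ ⊤ := ne_top_of_le_ne_top (WithTop.coe_ne_top) hle
    obtain ⟨m, hm⟩ := WithTop.ne_top_iff_exists.mp hne
    rw [← hm] at hle ⊢
    have hmk : m ≤ k := Nat.cast_le.mp hle
    rcases eq_or_lt_of_le hmk with h | h
    · exact congrArg _ h
    · exact absurd (le_of_eq hm.symm) (hlt m h)

lemma measurableSet_eq_st (hXm : ∀ i, Measurable (X i))
    (hτ : IsStoppingTimeN (natFiltration X) τ) (k : ℕ) :
    MeasurableSet {ω | τ ω = (k : ℕ∞)} := by
  rw [eq_set_eq]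
  exact (ms_le_of_st hXm hτ k).diff
    (Finset.measurableSet_biUnion _ fun j _ => ms_le_of_st hXm hτ j)

lemma disjoint_eq_st (τ : Ω → ℕ∞) : Pairwise (Function.onFun Disjoint
    fun k : ℕ => {ω | τ ω = (k : ℕ∞)}) := by
  intro i j hij
  simp only [Function.onFun, Set.disjoint_left, mem_setOf_eq]
  intro ω hi hj
  rw [hi] at hj
  exact hij (Nat.cast_inj.mp hj)

lemma compl_iUnion_eq_st (τ : Ω → ℕ∞) :
    (⋃ k : ℕ, {ω | τ ω = (k : ℕ∞)})ᶜ = {ω | τ ω = ⊤} := by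
  ext ω
  simp only [mem_compl_iff, mem_iUnion, mem_setOf_eq, not_exists]
  constructor
  · intro h
    by_contra hne
    obtain ⟨m, hm⟩ := WithTop.ne_top_iff_exists.mp hne
    exact h m hm.symm
  · intro h k hk
    rw [h] at hk
    exact WithTop.coe_ne_top hk.symm

lemma discReward_eq_on (k : ℕ) :
    ∀ ω ∈ {ω | τ ω = (k : ℕ∞)}, discReward α X τ ω = α ^ k * X k ω := by
  intro ω hω
  simp only [mem_setOf_eq] at hω
  have hne : τ ω ≠ ⊤ := by rw [hω]; exact WithTop.coe_ne_top
  simp only [discReward, dif_neg hne]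
  have : (τ ω).untop hne = k := by
    exact (WithTop.untop_eq_iff hne).mpr hω
  rw [this]

lemma discReward_measurable (hXm : ∀ i, Measurable (X i))
    (hτ : IsStoppingTimeN (natFiltration X) τ) :
    Measurable (discReward α X τ) := by
  apply measurable_of_tendsto_metrizable
    (f := fun n ω => ∑ k ∈ Finset.range n, if τ ω = (k : ℕ∞) then α ^ k * X k ω else 0)
  · intro n
    apply Finset.measurable_sum
    intro k _
    exact Measurable.ite (measurableSet_eq_st hXm hτ k) (((hXm k).const_mul _)) measurable_const
  · rw [tendsto_pi_nhds]
    intro ω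
    rcases eq_or_ne (τ ω) ⊤ with h | h
    · have : ∀ n, ∑ k ∈ Finset.range n, (if τ ω = (k : ℕ∞) then α ^ k * X k ω else 0) = 0 := by
        intro n
        apply Finset.sum_eq_zero
        intro k _
        rw [if_neg]
        rw [h]; exact fun hc => WithTop.coe_ne_top hc.symm
      simp only [this, discReward, dif_pos h]
      exact tendsto_const_nhds
    · obtain ⟨m, hm⟩ := WithTop.ne_top_iff_exists.mp h
      have hval : discReward α X τ ω = α ^ m * X m ω := discReward_eq_on m ω hm.symm
      rw [hval]
      apply tendsto_atTop_of_eventually_const (i₀ := m + 1)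
      intro n hn
      rw [Finset.sum_eq_single m]
      · exact if_pos hm.symm
      · intro k _ hk
        rw [if_neg]
        rw [← hm]
        exact fun hc => hk (Nat.cast_inj.mp hc).symm
      · intro hmn
        exact absurd (Finset.mem_range.mpr (by omega : m < n)) hmn

end STt

section I
variable {X : ℕ → Ω → ℝ} {τ : Ω → ℕ∞} {μ : Measure Ω} {α : ℝ} [IsProbabilityMeasure μ]

lemma integrable_X (hXm : ∀ i, Measurable (X i)) (x : ℝ) (hX0 : ∀ ω, X 0 ω = x)
    (hident : ∀ k : ℕ, IdentDistrib (X (k + 1)) (X 1) μ μ)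
    (hY1 : Integrable (X 1) μ) (k : ℕ) : Integrable (X k) μ := by
  rcases Nat.eq_zero_or_pos k with rfl | hpos
  · have : X 0 = fun _ => x := funext hX0
    rw [this]; exact integrable_const x
  · obtain ⟨j, rfl⟩ : ∃ j, k = j + 1 := ⟨k - 1, by omega⟩
    exact (hident j).integrable_iff.mpr hY1

lemma lintegral_X_eq (hident : ∀ k : ℕ, IdentDistrib (X (k + 1)) (X 1) μ μ) (k : ℕ) :
    ∫⁻ ω, ENNReal.ofReal (X (k + 1) ω) ∂μ = ∫⁻ ω, ENNReal.ofReal (X 1 ω) ∂μ :=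
  ((hident k).comp ENNReal.measurable_ofReal).lintegral_eq

lemma integrable_discReward (hXm : ∀ i, Measurable (X i)) (hXpos : ∀ i ω, 0 ≤ X i ω)
    (x : ℝ) (hX0 : ∀ ω, X 0 ω = x)
    (hident : ∀ k : ℕ, IdentDistrib (X (k + 1)) (X 1) μ μ)
    (hY1 : Integrable (X 1) μ) (hα : α ∈ Set.Ioo (0:ℝ) 1)
    (hmeas : Measurable (discReward α X τ))
    (hms : ∀ k : ℕ, MeasurableSet {ω | τ ω = (k : ℕ∞)})
    (heqon : ∀ k : ℕ, ∀ ω ∈ {ω | τ ω = (k : ℕ∞)}, discReward α X τ ω = α ^ k * X k ω)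
    (hcompl : (⋃ k : ℕ, {ω | τ ω = (k : ℕ∞)})ᶜ = {ω | τ ω = ⊤}) :
    Integrable (discReward α X τ) μ := by
  refine ⟨hmeas.aestronglyMeasurable, ?_⟩
  rw [hasFiniteIntegral_iff_norm]
  set U : Set Ω := ⋃ k : ℕ, {ω | τ ω = (k : ℕ∞)} with hU
  have hUm : MeasurableSet U := MeasurableSet.iUnion hms
  set C : ℝ≥0∞ := max (ENNReal.ofReal x) (∫⁻ ω, ENNReal.ofReal (X 1 ω) ∂μ) with hC
  have hCfin : C < ⊤ := by
    apply max_lt ENNReal.ofReal_lt_top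
    have := hY1.hasFiniteIntegral
    rw [hasFiniteIntegral_iff_norm] at this
    calc ∫⁻ ω, ENNReal.ofReal (X 1 ω) ∂μ ≤ ∫⁻ ω, ENNReal.ofReal ‖X 1 ω‖ ∂μ :=
          lintegral_mono fun ω => ENNReal.ofReal_le_ofReal (le_abs_self _)
      _ < ⊤ := this
  have hXk : ∀ k : ℕ, ∫⁻ ω, ENNReal.ofReal (X k ω) ∂μ ≤ C := by
    intro k
    rcases Nat.eq_zero_or_pos k with rfl | hpos
    · simp only [hX0, lintegral_const, measure_univ, mul_one]
      exact le_max_left _ _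
    · obtain ⟨j, rfl⟩ : ∃ j, k = j + 1 := ⟨k - 1, by omega⟩
      rw [lintegral_X_eq hident]
      exact le_max_right _ _
  calc ∫⁻ ω, ENNReal.ofReal ‖discReward α X τ ω‖ ∂μ
      = (∫⁻ ω in U, ENNReal.ofReal ‖discReward α X τ ω‖ ∂μ)
        + ∫⁻ ω in Uᶜ, ENNReal.ofReal ‖discReward α X τ ω‖ ∂μ :=
        (lintegral_add_compl _ hUm).symm
    _ = (∑' k : ℕ, ∫⁻ ω in {ω | τ ω = (k : ℕ∞)}, ENNReal.ofReal ‖discReward α X τ ω‖ ∂μ) + 0 := by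
        congr 1
        · exact lintegral_iUnion hms (by
            intro i j hij
            simp only [Function.onFun, Set.disjoint_left, mem_setOf_eq]
            intro ω hi hj
            rw [hi] at hj
            exact hij (Nat.cast_inj.mp hj)) _
        · rw [hcompl]
          rw [setLIntegral_congr_fun (s := {ω | τ ω = ⊤}) (by rw [← hcompl]; exact hUm.compl) ?_]
          · exact lintegral_zero
          · intro ω hω
            simp only [mem_setOf_eq] at hω
            simp [discReward, dif_pos hω]
    _ ≤ ∑' k : ℕ, ENNReal.ofReal α ^ k * C := by
        rw [add_zero]
        apply ENNReal.tsum_le_tsum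
        intro k
        calc ∫⁻ ω in {ω | τ ω = (k : ℕ∞)}, ENNReal.ofReal ‖discReward α X τ ω‖ ∂μ
            = ∫⁻ ω in {ω | τ ω = (k : ℕ∞)}, ENNReal.ofReal α ^ k * ENNReal.ofReal (X k ω) ∂μ := by
              apply setLIntegral_congr_fun (hms k) ?_
              intro ω hω
              dsimp only
              rw [heqon k ω hω, Real.norm_eq_abs, abs_of_nonneg
                (mul_nonneg (pow_nonneg hα.1.le _) (hXpos k ω)),
                ENNReal.ofReal_mul (pow_nonneg hα.1.le _), ENNReal.ofReal_pow hα.1.le]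
          _ ≤ ∫⁻ ω, ENNReal.ofReal α ^ k * ENNReal.ofReal (X k ω) ∂μ :=
              setLIntegral_le_lintegral _ _
          _ = ENNReal.ofReal α ^ k * ∫⁻ ω, ENNReal.ofReal (X k ω) ∂μ :=
              lintegral_const_mul _ (ENNReal.measurable_ofReal.comp (hXm k))
          _ ≤ ENNReal.ofReal α ^ k * C := mul_le_mul_right (hXk k) _
    _ = (1 - ENNReal.ofReal α)⁻¹ * C := by rw [ENNReal.tsum_mul_right, ENNReal.tsum_geometric]
    _ < ⊤ := by
        apply ENNReal.mul_lt_top _ hCfin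
        rw [ENNReal.inv_lt_top]
        rw [tsub_pos_iff_lt]
        exact ENNReal.ofReal_lt_one.mpr hα.2

lemma hasSum_integral_discReward (hXm : ∀ i, Measurable (X i))
    (hint : Integrable (discReward α X τ) μ)
    (hms : ∀ k : ℕ, MeasurableSet {ω | τ ω = (k : ℕ∞)})
    (heqon : ∀ k : ℕ, ∀ ω ∈ {ω | τ ω = (k : ℕ∞)}, discReward α X τ ω = α ^ k * X k ω)
    (hcompl : (⋃ k : ℕ, {ω | τ ω = (k : ℕ∞)})ᶜ = {ω | τ ω = ⊤}) :
    HasSum (fun k : ℕ => ∫ ω in {ω | τ ω = (k : ℕ∞)}, α ^ k * X k ω ∂μ)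
      (∫ ω, discReward α X τ ω ∂μ) := by
  set U : Set Ω := ⋃ k : ℕ, {ω | τ ω = (k : ℕ∞)} with hU
  have hUm : MeasurableSet U := MeasurableSet.iUnion hms
  have hdisj : Pairwise (Function.onFun Disjoint fun k : ℕ => {ω | τ ω = (k : ℕ∞)}) := by
    intro i j hij
    simp only [Function.onFun, Set.disjoint_left, mem_setOf_eq]
    intro ω hi hj
    rw [hi] at hj
    exact hij (Nat.cast_inj.mp hj)
  have h0 : ∫ ω in Uᶜ, discReward α X τ ω ∂μ = 0 := by
    rw [setIntegral_congr_fun hUm.compl (g := fun _ => (0:ℝ)) ?_, integral_zero]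
    intro ω hω
    rw [hcompl] at hω
    simp only [mem_setOf_eq] at hω
    simp [discReward, dif_pos hω]
  have htot : ∫ ω, discReward α X τ ω ∂μ = ∫ ω in U, discReward α X τ ω ∂μ := by
    rw [← integral_add_compl hUm hint, h0, add_zero]
  rw [htot]
  have hsum := hasSum_integral_iUnion hms hdisj (hint.integrableOn)
  apply hsum.congr_fun
  intro k
  exact setIntegral_congr_fun (hms k) fun ω hω => (heqon k ω hω).symm
end I

section E
variable {X : ℕ → Ω → ℝ} {τ : Ω → ℕ∞} {μ : Measure Ω} {α : ℝ} [IsProbabilityMeasure μ]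

/-- set identity for the "future" event -/
lemma future_eq (τ : Ω → ℕ∞) (n : ℕ) :
    {ω | ((n + 1 : ℕ) : ℕ∞) ≤ τ ω} = {ω | τ ω ≤ (n : ℕ∞)}ᶜ := by
  ext ω
  simp only [mem_setOf_eq, mem_compl_iff, not_le]
  rw [Nat.cast_add, Nat.cast_one, ENat.add_one_le_iff (ENat.coe_ne_top n)]

/-- split of the event {n ≤ τ} -/
lemma present_split (τ : Ω → ℕ∞) (n : ℕ) :
    {ω | (n : ℕ∞) ≤ τ ω} = {ω | τ ω = (n : ℕ∞)} ∪ {ω | ((n + 1 : ℕ) : ℕ∞) ≤ τ ω} := by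
  ext ω
  simp only [mem_setOf_eq, mem_union]
  constructor
  · intro h
    rcases eq_or_lt_of_le h with h' | h'
    · exact Or.inl h'.symm
    · right
      rw [Nat.cast_add, Nat.cast_one, ENat.add_one_le_iff (ENat.coe_ne_top n)]
      exact h'
  · rintro (h | h)
    · exact le_of_eq h.symm
    · refine le_trans ?_ h
      exact_mod_cast Nat.cast_le.mpr (Nat.le_succ n)

lemma present_disj (τ : Ω → ℕ∞) (n : ℕ) :
    Disjoint {ω | τ ω = (n : ℕ∞)} {ω | ((n + 1 : ℕ) : ℕ∞) ≤ τ ω} := by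
  rw [Set.disjoint_left]
  intro ω h1 h2
  simp only [mem_setOf_eq] at h1 h2
  rw [h1, Nat.cast_le] at h2
  omega

/-- `E[max(X₁, b)] = b/α` given the threshold equation -/
lemma emax_eq (hY1 : Integrable (X 1) μ) {b : ℝ} (hbpos : 0 < b)
    (hα : α ∈ Set.Ioo (0:ℝ) 1)
    (heq : ∫ ω, max (X 1 ω - b) 0 ∂μ = (1 - α) / α * b) :
    ∫ ω, max (X 1 ω) b ∂μ = b / α := by
  have hpt : ∀ ω, max (X 1 ω) b = b + max (X 1 ω - b) 0 := by
    intro ω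
    rcases le_total (X 1 ω) b with h | h
    · rw [max_eq_right h, max_eq_right (by linarith)]; ring
    · rw [max_eq_left h, max_eq_left (by linarith)]; ring
  simp_rw [hpt]
  have hi : Integrable (fun ω => max (X 1 ω - b) 0) μ :=
    (hY1.sub (integrable_const b)).sup (integrable_const 0)
  rw [integral_add (integrable_const b) hi, integral_const, probReal_univ, heq]
  have hα0 : α ≠ 0 := ne_of_gt hα.1
  field_simp
  ring
end E

section F
variable {X : ℕ → Ω → ℝ} {τ : Ω → ℕ∞} {μ : Measure Ω} {α : ℝ} [IsProbabilityMeasure μ]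

lemma setIntegral_future (hXm : ∀ i, Measurable (X i)) (hX0 : ∃ x : ℝ, ∀ ω, X 0 ω = x)
    (hindep : iIndepFun (fun k => X (k + 1)) μ)
    (hτ : IsStoppingTimeN (natFiltration X) τ)
    (hident : ∀ k : ℕ, IdentDistrib (X (k + 1)) (X 1) μ μ)
    (b : ℝ) (n : ℕ) :
    ∫ ω in {ω | ((n + 1 : ℕ) : ℕ∞) ≤ τ ω}, max (X (n + 1) ω) b ∂μ
      = (μ {ω | ((n + 1 : ℕ) : ℕ∞) ≤ τ ω}).toReal * ∫ ω, max (X 1 ω) b ∂μ := by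
  set B := {ω | ((n + 1 : ℕ) : ℕ∞) ≤ τ ω} with hB
  have hBF : MeasurableSet[natFiltration X n] B := by
    rw [hB, future_eq τ n]
    exact (hτ n).compl
  have hBm : MeasurableSet B := natFiltration_le hXm n _ hBF
  set v : Ω → ℝ := fun ω => max (X (n + 1) ω) b with hv
  have hvm : Measurable v := (hXm (n + 1)).max measurable_const
  have hvflt : Measurable[MeasurableSpace.comap (X (n + 1)) inferInstance] v := by
    have hXc : Measurable[MeasurableSpace.comap (X (n + 1)) inferInstance] (X (n + 1)) :=
      measurable_iff_comap_le.mpr le_rfl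
    exact (measurable_id.max measurable_const).comp hXc
  set u : Ω → ℝ := B.indicator (fun _ => 1) with hu
  have huflt : Measurable[natFiltration X n] u := measurable_const.indicator hBF
  have hum : Measurable u := measurable_const.indicator hBm
  have hIF : IndepFun u v μ :=
    indepFun_of_indep (indep_natFiltration hXm hX0 hindep n) huflt hvflt
  have key := hIF.integral_mul_eq_mul_integral hum.aestronglyMeasurable hvm.aestronglyMeasurable
  have huv : (u * v) = B.indicator v := by
    funext ω; by_cases h : ω ∈ B <;> simp [hu, Set.indicator, h]
  rw [huv, integral_indicator hBm] at key
  have hu1 : integral μ u = (μ B).toReal := by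
    rw [hu]; exact integral_indicator_one (μ := μ) hBm
  rw [key, hu1]
  congr 1
  exact ((hident n).comp (measurable_id.max measurable_const)).integral_eq

variable {b : ℝ}

lemma integrable_maxX (hXm : ∀ i, Measurable (X i)) (x : ℝ) (hX0 : ∀ ω, X 0 ω = x)
    (hident : ∀ k : ℕ, IdentDistrib (X (k + 1)) (X 1) μ μ)
    (hY1 : Integrable (X 1) μ) (n : ℕ) :
    Integrable (fun ω => max (X n ω) b) μ :=
  (integrable_X hXm x hX0 hident hY1 n).sup (integrable_const b)

lemma J_split (hXm : ∀ i, Measurable (X i)) (x : ℝ) (hX0 : ∀ ω, X 0 ω = x)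
    (hident : ∀ k : ℕ, IdentDistrib (X (k + 1)) (X 1) μ μ)
    (hY1 : Integrable (X 1) μ)
    (hτ : IsStoppingTimeN (natFiltration X) τ) (n : ℕ) :
    ∫ ω in {ω | (n : ℕ∞) ≤ τ ω}, max (X n ω) b ∂μ
      = (∫ ω in {ω | τ ω = (n : ℕ∞)}, max (X n ω) b ∂μ)
        + ∫ ω in {ω | ((n + 1 : ℕ) : ℕ∞) ≤ τ ω}, max (X n ω) b ∂μ := by
  have hBm : MeasurableSet {ω | ((n + 1 : ℕ) : ℕ∞) ≤ τ ω} := by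
    rw [future_eq τ n]; exact (ms_le_of_st hXm hτ n).compl
  rw [present_split τ n]
  exact setIntegral_union (present_disj τ n) hBm
    (integrable_maxX hXm x hX0 hident hY1 n).integrableOn
    (integrable_maxX hXm x hX0 hident hY1 n).integrableOn

end F
section G
variable {X : ℕ → Ω → ℝ} {τ : Ω → ℕ∞} {μ : Measure Ω} {α x b : ℝ} [IsProbabilityMeasure μ]

/-- The cumulative-reward piece `I n`. -/
def Ifun (μ : Measure Ω) (X : ℕ → Ω → ℝ) (τ : Ω → ℕ∞) (α : ℝ) (n : ℕ) : ℝ :=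
  ∫ ω in {ω | τ ω = (n : ℕ∞)}, α ^ n * X n ω ∂μ

/-- The continuation-value piece `J n`. -/
def Jfun (μ : Measure Ω) (X : ℕ → Ω → ℝ) (τ : Ω → ℕ∞) (α b : ℝ) (n : ℕ) : ℝ :=
  α ^ n * ∫ ω in {ω | (n : ℕ∞) ≤ τ ω}, max (X n ω) b ∂μ

lemma key_identity (hXm : ∀ i, Measurable (X i)) (hX0 : ∃ x : ℝ, ∀ ω, X 0 ω = x)
    (hindep : iIndepFun (fun k => X (k + 1)) μ)
    (hτ : IsStoppingTimeN (natFiltration X) τ)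
    (hident : ∀ k : ℕ, IdentDistrib (X (k + 1)) (X 1) μ μ)
    (hα : α ∈ Set.Ioo (0:ℝ) 1)
    (hEmax : ∫ ω, max (X 1 ω) b ∂μ = b / α) (n : ℕ) :
    Jfun μ X τ α b (n + 1)
      = α ^ n * (b * (μ {ω | ((n + 1 : ℕ) : ℕ∞) ≤ τ ω}).toReal) := by
  rw [Jfun, setIntegral_future hXm hX0 hindep hτ hident b n, hEmax]
  have hα0 : α ≠ 0 := ne_of_gt hα.1
  field_simp
  ring

lemma Jstep_le (hXm : ∀ i, Measurable (X i)) (hX0 : ∀ ω, X 0 ω = x)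
    (hindep : iIndepFun (fun k => X (k + 1)) μ)
    (hτ : IsStoppingTimeN (natFiltration X) τ)
    (hident : ∀ k : ℕ, IdentDistrib (X (k + 1)) (X 1) μ μ)
    (hY1 : Integrable (X 1) μ)
    (hα : α ∈ Set.Ioo (0:ℝ) 1)
    (hEmax : ∫ ω, max (X 1 ω) b ∂μ = b / α) (n : ℕ) :
    Ifun μ X τ α n + Jfun μ X τ α b (n + 1) ≤ Jfun μ X τ α b n := by
  have hsplit := J_split (b := b) hXm x hX0 hident hY1 hτ n
  have hXi := integrable_X hXm x hX0 hident hY1 n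
  have hMi := integrable_maxX (b := b) hXm x hX0 hident hY1 n
  have h1 : ∫ ω in {ω | τ ω = (n : ℕ∞)}, X n ω ∂μ
      ≤ ∫ ω in {ω | τ ω = (n : ℕ∞)}, max (X n ω) b ∂μ :=
    setIntegral_mono hXi.integrableOn hMi.integrableOn fun ω => le_max_left _ _
  have h2 : b * (μ {ω | ((n + 1 : ℕ) : ℕ∞) ≤ τ ω}).toReal
      ≤ ∫ ω in {ω | ((n + 1 : ℕ) : ℕ∞) ≤ τ ω}, max (X n ω) b ∂μ := by
    have := setIntegral_mono (f := fun _ => b) (integrable_const b).integrableOn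
      hMi.integrableOn (fun ω => le_max_right _ _)
        (s := {ω | ((n + 1 : ℕ) : ℕ∞) ≤ τ ω})
    rwa [setIntegral_const, smul_eq_mul, mul_comm] at this
  rw [key_identity hXm ⟨x, hX0⟩ hindep hτ hident hα hEmax n]
  have hIn : Ifun μ X τ α n = α ^ n * ∫ ω in {ω | τ ω = (n : ℕ∞)}, X n ω ∂μ := by
    rw [Ifun]; exact integral_const_mul _ _
  rw [hIn, Jfun, hsplit, mul_add]
  have hpow : (0:ℝ) ≤ α ^ n := pow_nonneg hα.1.le n
  have := mul_le_mul_of_nonneg_left h1 hpow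
  have := mul_le_mul_of_nonneg_left h2 hpow
  nlinarith

lemma Jstep_eq (hXm : ∀ i, Measurable (X i)) (hX0 : ∀ ω, X 0 ω = x)
    (hindep : iIndepFun (fun k => X (k + 1)) μ)
    (hτ : IsStoppingTimeN (natFiltration X) τ)
    (hident : ∀ k : ℕ, IdentDistrib (X (k + 1)) (X 1) μ μ)
    (hY1 : Integrable (X 1) μ)
    (hα : α ∈ Set.Ioo (0:ℝ) 1)
    (hEmax : ∫ ω, max (X 1 ω) b ∂μ = b / α) (n : ℕ)
    (hup : ∀ ω, τ ω = (n : ℕ∞) → b ≤ X n ω)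
    (hdown : ∀ ω, ((n + 1 : ℕ) : ℕ∞) ≤ τ ω → X n ω < b) :
    Ifun μ X τ α n + Jfun μ X τ α b (n + 1) = Jfun μ X τ α b n := by
  have hsplit := J_split (b := b) hXm x hX0 hident hY1 hτ n
  have h1 : ∫ ω in {ω | τ ω = (n : ℕ∞)}, max (X n ω) b ∂μ
      = ∫ ω in {ω | τ ω = (n : ℕ∞)}, X n ω ∂μ :=
    setIntegral_congr_fun (measurableSet_eq_st hXm hτ n)
      fun ω hω => max_eq_left (hup ω hω)
  have hBm : MeasurableSet {ω | ((n + 1 : ℕ) : ℕ∞) ≤ τ ω} := by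
    rw [future_eq τ n]; exact (ms_le_of_st hXm hτ n).compl
  have h2 : ∫ ω in {ω | ((n + 1 : ℕ) : ℕ∞) ≤ τ ω}, max (X n ω) b ∂μ
      = b * (μ {ω | ((n + 1 : ℕ) : ℕ∞) ≤ τ ω}).toReal := by
    rw [setIntegral_congr_fun hBm (g := fun _ => b) fun ω hω => max_eq_right (hdown ω hω).le,
      setIntegral_const, smul_eq_mul, mul_comm, measureReal_def]
  rw [key_identity hXm ⟨x, hX0⟩ hindep hτ hident hα hEmax n]
  have hIn : Ifun μ X τ α n = α ^ n * ∫ ω in {ω | τ ω = (n : ℕ∞)}, X n ω ∂μ := by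
    rw [Ifun]; exact integral_const_mul _ _
  rw [hIn, Jfun, hsplit, mul_add, h1, h2]

end G
section H
variable {X : ℕ → Ω → ℝ} {τ : Ω → ℕ∞} {μ : Measure Ω} {α x b : ℝ} [IsProbabilityMeasure μ]

lemma ms_ge_st (hXm : ∀ i, Measurable (X i)) (hτ : IsStoppingTimeN (natFiltration X) τ)
    (n : ℕ) : MeasurableSet {ω | (n : ℕ∞) ≤ τ ω} := by
  rcases n with _ | m
  · have : {ω | ((0 : ℕ) : ℕ∞) ≤ τ ω} = univ := eq_univ_of_forall fun ω => by simp
    rw [this]; exact MeasurableSet.univ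
  · rw [future_eq τ m]; exact (ms_le_of_st hXm hτ m).compl

lemma J_nonneg (hXm : ∀ i, Measurable (X i)) (hXpos : ∀ i ω, 0 ≤ X i ω)
    (hτ : IsStoppingTimeN (natFiltration X) τ) (hα0 : 0 < α) (n : ℕ) :
    0 ≤ Jfun μ X τ α b n := by
  apply mul_nonneg (pow_nonneg hα0.le n)
  exact setIntegral_nonneg (ms_ge_st hXm hτ n) fun ω _ => le_max_of_le_left (hXpos n ω)

lemma J_zero (hX0 : ∀ ω, X 0 ω = x) : Jfun μ X τ α b 0 = max x b := by
  rw [Jfun, pow_zero, one_mul]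
  have h1 : {ω | ((0 : ℕ) : ℕ∞) ≤ τ ω} = univ := eq_univ_of_forall fun ω => by simp
  rw [h1, Measure.restrict_univ]
  have : (fun ω => max (X 0 ω) b) = fun _ => max x b := by funext ω; rw [hX0]
  rw [this, integral_const, probReal_univ, one_smul]

lemma sum_add_J_le (hXm : ∀ i, Measurable (X i)) (hX0 : ∀ ω, X 0 ω = x)
    (hindep : iIndepFun (fun k => X (k + 1)) μ)
    (hτ : IsStoppingTimeN (natFiltration X) τ)
    (hident : ∀ k : ℕ, IdentDistrib (X (k + 1)) (X 1) μ μ)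
    (hY1 : Integrable (X 1) μ) (hα : α ∈ Set.Ioo (0:ℝ) 1)
    (hEmax : ∫ ω, max (X 1 ω) b ∂μ = b / α) (n : ℕ) :
    (∑ k ∈ Finset.range n, Ifun μ X τ α k) + Jfun μ X τ α b n ≤ Jfun μ X τ α b 0 := by
  induction n with
  | zero => simp
  | succ m ih =>
    rw [Finset.sum_range_succ]
    have := Jstep_le hXm hX0 hindep hτ hident hY1 hα hEmax m
    linarith

lemma sum_add_J_eq (hXm : ∀ i, Measurable (X i)) (hX0 : ∀ ω, X 0 ω = x)
    (hindep : iIndepFun (fun k => X (k + 1)) μ)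
    (hτ : IsStoppingTimeN (natFiltration X) τ)
    (hident : ∀ k : ℕ, IdentDistrib (X (k + 1)) (X 1) μ μ)
    (hY1 : Integrable (X 1) μ) (hα : α ∈ Set.Ioo (0:ℝ) 1)
    (hEmax : ∫ ω, max (X 1 ω) b ∂μ = b / α)
    (hup : ∀ n : ℕ, ∀ ω, τ ω = (n : ℕ∞) → b ≤ X n ω)
    (hdown : ∀ n : ℕ, ∀ ω, ((n + 1 : ℕ) : ℕ∞) ≤ τ ω → X n ω < b) (n : ℕ) :
    (∑ k ∈ Finset.range n, Ifun μ X τ α k) + Jfun μ X τ α b n = Jfun μ X τ α b 0 := by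
  induction n with
  | zero => simp
  | succ m ih =>
    rw [Finset.sum_range_succ]
    have := Jstep_eq hXm hX0 hindep hτ hident hY1 hα hEmax m (hup m) (hdown m)
    linarith

lemma J_tendsto (hXm : ∀ i, Measurable (X i)) (hXpos : ∀ i ω, 0 ≤ X i ω)
    (hX0 : ∃ x : ℝ, ∀ ω, X 0 ω = x)
    (hindep : iIndepFun (fun k => X (k + 1)) μ)
    (hτ : IsStoppingTimeN (natFiltration X) τ)
    (hident : ∀ k : ℕ, IdentDistrib (X (k + 1)) (X 1) μ μ)
    (hb : 0 < b) (hα : α ∈ Set.Ioo (0:ℝ) 1)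
    (hEmax : ∫ ω, max (X 1 ω) b ∂μ = b / α) :
    Tendsto (Jfun μ X τ α b) atTop (𝓝 0) := by
  rw [← Filter.tendsto_add_atTop_iff_nat 1]
  have hbound : ∀ n : ℕ, Jfun μ X τ α b (n + 1) ≤ α ^ n * b := by
    intro n
    rw [key_identity hXm hX0 hindep hτ hident hα hEmax n]
    have h1 : (μ {ω | ((n + 1 : ℕ) : ℕ∞) ≤ τ ω}).toReal ≤ 1 := by
      have := ENNReal.toReal_mono (by simp) (prob_le_one
        (μ := μ) (s := {ω | ((n + 1 : ℕ) : ℕ∞) ≤ τ ω}))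
      simpa using this
    have hpow : (0:ℝ) ≤ α ^ n := pow_nonneg hα.1.le n
    have h0 : (0:ℝ) ≤ (μ {ω | ((n + 1 : ℕ) : ℕ∞) ≤ τ ω}).toReal := ENNReal.toReal_nonneg
    have h2 : b * (μ {ω | ((n + 1 : ℕ) : ℕ∞) ≤ τ ω}).toReal ≤ b := by nlinarith
    exact mul_le_mul_of_nonneg_left h2 hpow
  apply squeeze_zero (fun n => J_nonneg hXm hXpos hτ hα.1 (n + 1)) hbound
  have := (tendsto_pow_atTop_nhds_zero_of_lt_one hα.1.le hα.2).mul_const b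
  simpa using this

lemma value_le_max (hXm : ∀ i, Measurable (X i)) (hXpos : ∀ i ω, 0 ≤ X i ω)
    (hX0 : ∀ ω, X 0 ω = x)
    (hindep : iIndepFun (fun k => X (k + 1)) μ)
    (hτ : IsStoppingTimeN (natFiltration X) τ)
    (hident : ∀ k : ℕ, IdentDistrib (X (k + 1)) (X 1) μ μ)
    (hY1 : Integrable (X 1) μ) (hα : α ∈ Set.Ioo (0:ℝ) 1)
    (hEmax : ∫ ω, max (X 1 ω) b ∂μ = b / α) :
    ∫ ω, discReward α X τ ω ∂μ ≤ max x b := by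
  have hsum := hasSum_integral_discReward hXm
    (integrable_discReward hXm hXpos x hX0 hident hY1 hα
      (discReward_measurable hXm hτ) (measurableSet_eq_st hXm hτ)
      (fun k => discReward_eq_on k) (compl_iUnion_eq_st τ))
    (measurableSet_eq_st hXm hτ) (fun k => discReward_eq_on k) (compl_iUnion_eq_st τ)
  rw [← J_zero (μ := μ) (τ := τ) (α := α) (b := b) hX0]
  refine le_of_tendsto hsum.tendsto_sum_nat (Eventually.of_forall fun n => ?_)
  have h1 := sum_add_J_le hXm hX0 hindep hτ hident hY1 hα hEmax n
  have h2 := J_nonneg (μ := μ) (τ := τ) (α := α) (b := b) hXm hXpos hτ hα.1 n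
  have h4 : (∑ k ∈ Finset.range n, Ifun μ X τ α k) ≤ Jfun μ X τ α b 0 := by linarith
  exact h4

lemma value_eq_max (hXm : ∀ i, Measurable (X i)) (hXpos : ∀ i ω, 0 ≤ X i ω)
    (hX0 : ∀ ω, X 0 ω = x)
    (hindep : iIndepFun (fun k => X (k + 1)) μ)
    (hτ : IsStoppingTimeN (natFiltration X) τ)
    (hident : ∀ k : ℕ, IdentDistrib (X (k + 1)) (X 1) μ μ)
    (hY1 : Integrable (X 1) μ) (hb : 0 < b) (hα : α ∈ Set.Ioo (0:ℝ) 1)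
    (hEmax : ∫ ω, max (X 1 ω) b ∂μ = b / α)
    (hup : ∀ n : ℕ, ∀ ω, τ ω = (n : ℕ∞) → b ≤ X n ω)
    (hdown : ∀ n : ℕ, ∀ ω, ((n + 1 : ℕ) : ℕ∞) ≤ τ ω → X n ω < b) :
    ∫ ω, discReward α X τ ω ∂μ = max x b := by
  have hsum := hasSum_integral_discReward hXm
    (integrable_discReward hXm hXpos x hX0 hident hY1 hα
      (discReward_measurable hXm hτ) (measurableSet_eq_st hXm hτ)
      (fun k => discReward_eq_on k) (compl_iUnion_eq_st τ))
    (measurableSet_eq_st hXm hτ) (fun k => discReward_eq_on k) (compl_iUnion_eq_st τ)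
  have htend : Tendsto (fun n => ∑ k ∈ Finset.range n, Ifun μ X τ α k) atTop
      (𝓝 (Jfun μ X τ α b 0)) := by
    have heq : ∀ n, (∑ k ∈ Finset.range n, Ifun μ X τ α k)
        = Jfun μ X τ α b 0 - Jfun μ X τ α b n := by
      intro n
      have := sum_add_J_eq hXm hX0 hindep hτ hident hY1 hα hEmax hup hdown n
      linarith
    simp_rw [heq]
    have := (tendsto_const_nhds (x := Jfun μ X τ α b 0) (f := atTop (α := ℕ))).sub
      (J_tendsto hXm hXpos ⟨x, hX0⟩ hindep hτ hident hb hα hEmax)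
    simpa using this
  have := tendsto_nhds_unique hsum.tendsto_sum_nat htend
  rw [this, J_zero hX0]
end H
section K
variable {X : ℕ → Ω → ℝ} {μ : Measure Ω} {b : ℝ}

lemma tauStar_le_iff (X : ℕ → Ω → ℝ) (b : ℝ) (ω : Ω) (n : ℕ) :
    (⨅ k ∈ {k : ℕ | b ≤ X k ω}, (k : ℕ∞)) ≤ (n : ℕ∞) ↔ ∃ i ≤ n, b ≤ X i ω := by
  constructor
  · intro h
    by_contra hc
    push_neg at hc
    have hlow : ((n + 1 : ℕ) : ℕ∞) ≤ ⨅ k ∈ {k : ℕ | b ≤ X k ω}, (k : ℕ∞) := by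
      apply le_iInf₂
      intro i hi
      have h1 : ¬ i ≤ n := fun hin => absurd hi (not_le_of_gt (hc i hin))
      have h2 : n + 1 ≤ i := by omega
      exact Nat.cast_le.mpr h2
    have := hlow.trans h
    rw [Nat.cast_le] at this
    omega
  · rintro ⟨i, hin, hbi⟩
    exact le_trans (iInf₂_le i hbi) (Nat.cast_le.mpr hin)

lemma tauStar_st :
    IsStoppingTimeN (natFiltration X) (fun ω => ⨅ k ∈ {k : ℕ | b ≤ X k ω}, (k : ℕ∞)) := by
  intro k
  have hset : {ω | (⨅ j ∈ {j : ℕ | b ≤ X j ω}, (j : ℕ∞)) ≤ (k : ℕ∞)}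
      = ⋃ i ∈ Finset.range (k + 1), {ω | b ≤ X i ω} := by
    ext ω
    simp only [mem_setOf_eq, mem_iUnion, Finset.mem_range, Nat.lt_succ_iff, exists_prop]
    exact tauStar_le_iff X b ω k
  rw [hset]
  apply Finset.measurableSet_biUnion
  intro i hi
  have : {ω | b ≤ X i ω} = X i ⁻¹' (Ici b) := rfl
  rw [this]
  exact measurable_natFiltration (Finset.mem_range.mp hi |> Nat.lt_succ_iff.mp) measurableSet_Ici

lemma tauStar_up (n : ℕ) (ω : Ω)
    (h : (⨅ k ∈ {k : ℕ | b ≤ X k ω}, (k : ℕ∞)) = (n : ℕ∞)) : b ≤ X n ω := by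
  obtain ⟨i, hin, hbi⟩ := (tauStar_le_iff X b ω n).mp h.le
  rcases eq_or_lt_of_le hin with rfl | hlt
  · exact hbi
  · exfalso
    have : (⨅ k ∈ {k : ℕ | b ≤ X k ω}, (k : ℕ∞)) ≤ (i : ℕ∞) := iInf₂_le i hbi
    rw [h, Nat.cast_le] at this
    omega

lemma tauStar_down (n : ℕ) (ω : Ω)
    (h : ((n + 1 : ℕ) : ℕ∞) ≤ ⨅ k ∈ {k : ℕ | b ≤ X k ω}, (k : ℕ∞)) : X n ω < b := by
  by_contra hc
  push_neg at hc
  have h1 : (⨅ k ∈ {k : ℕ | b ≤ X k ω}, (k : ℕ∞)) ≤ (n : ℕ∞) :=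
    (tauStar_le_iff X b ω n).mpr ⟨n, le_rfl, hc⟩
  have := h.trans h1
  rw [Nat.cast_le] at this
  omega

end K

lemma max_sub_add (x b : ℝ) : max (x - b) 0 + b = max x b := by
  rcases le_total x b with h | h
  · rw [max_eq_right (by linarith : x - b ≤ 0), max_eq_right h]; ring
  · rw [max_eq_left (by linarith : (0:ℝ) ≤ x - b), max_eq_left h]; ring

/-- **house-selling problem with one exercise.** For i.i.d. nonnegative
offers `X₁, X₂, …` with `𝔼 X₁² < ∞`, `𝔼 X₁ > 0`, discount factor `α ∈ (0,1)` and
`X₀ := x ≥ 0`, there is a unique `x* > 0` with `(1-α)/α = 𝔼((X₁/x* - 1)⁺)`; the optimal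
stopping value `v(x) = sup_τ 𝔼(α^τ X_τ)` equals `(x - x*)⁺ + x*`, and this value is
attained by the threshold rule `τ* = inf{k ≥ 0 : X_k ≥ x*}`. -/
theorem house_selling_single_exercise
    (μ : Measure Ω) [IsProbabilityMeasure μ]
    (X : ℕ → Ω → ℝ) (hXm : ∀ i, Measurable (X i)) (hXpos : ∀ i ω, 0 ≤ X i ω)
    (x : ℝ) (hx : 0 ≤ x) (hX0 : ∀ ω, X 0 ω = x)
    (hindep : iIndepFun (fun k => X (k + 1)) μ)
    (hident : ∀ k : ℕ, IdentDistrib (X (k + 1)) (X 1) μ μ)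
    (hL2 : Integrable (fun ω => (X 1 ω) ^ 2) μ)
    (hmean : 0 < ∫ ω, X 1 ω ∂μ)
    (α : ℝ) (hα : α ∈ Set.Ioo (0 : ℝ) 1) :
    ∃ xstar : ℝ,
      (0 < xstar ∧ (1 - α) / α = ∫ ω, max (X 1 ω / xstar - 1) 0 ∂μ) ∧
      (∀ y : ℝ, 0 < y → (1 - α) / α = ∫ ω, max (X 1 ω / y - 1) 0 ∂μ → y = xstar) ∧
      IsLUB {r : ℝ | ∃ τ : Ω → ℕ∞, IsStoppingTimeN (natFiltration X) τ ∧
          r = ∫ ω, discReward α X τ ω ∂μ}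
        (max (x - xstar) 0 + xstar) ∧
      IsStoppingTimeN (natFiltration X)
        (fun ω => ⨅ k ∈ {k : ℕ | xstar ≤ X k ω}, (k : ℕ∞)) ∧
      ∫ ω, discReward α X (fun ω' => ⨅ k ∈ {k : ℕ | xstar ≤ X k ω'}, (k : ℕ∞)) ω ∂μ =
        max (x - xstar) 0 + xstar := by
  have hY1 : Integrable (X 1) μ :=
    ((memLp_two_iff_integrable_sq (hXm 1).aestronglyMeasurable).mpr hL2).integrable one_le_two
  have hc : 0 < (1 - α) / α := div_pos (by linarith [hα.2]) hα.1
  obtain ⟨b, hb, hgb⟩ := exists_xstar μ hY1 (hXpos 1) hmean hc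
  refine ⟨b, ⟨hb, ?_⟩, ?_, ?_, tauStar_st, ?_⟩
  · rw [g_rescale μ hY1 hb, hgb, mul_div_assoc, div_self (ne_of_gt hb), mul_one]
  · -- uniqueness
    intro y hy heqy
    rw [g_rescale μ hY1 hy] at heqy
    rcases lt_trichotomy y b with hlt | heq | hgt
    · exfalso
      have hg2 : 0 < ∫ ω, max (X 1 ω - b) 0 ∂μ := by rw [hgb]; positivity
      have := g_strict μ hY1 hy hlt hg2
      rw [hgb, ← heqy, mul_div_assoc, div_self (ne_of_gt hb), mul_one] at this
      exact lt_irrefl _ this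
    · exact heq
    · exfalso
      have hgy : ∫ ω, max (X 1 ω - y) 0 ∂μ = (1 - α) / α * y := by
        have := (div_eq_iff (ne_of_gt hy)).mp heqy.symm
        linarith [this]
      have hg2 : 0 < ∫ ω, max (X 1 ω - y) 0 ∂μ := by rw [hgy]; positivity
      have := g_strict μ hY1 hb hgt hg2
      rw [hgy, hgb, mul_div_assoc, div_self (ne_of_gt hy), mul_one,
        mul_div_assoc, div_self (ne_of_gt hb), mul_one] at this
      exact lt_irrefl _ this
  · -- IsLUB
    have hEmax : ∫ ω, max (X 1 ω) b ∂μ = b / α :=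
      emax_eq hY1 hb hα (by rw [hgb])
    rw [max_sub_add]
    constructor
    · rintro r ⟨τ, hτ, rfl⟩
      exact value_le_max hXm hXpos hX0 hindep hτ hident hY1 hα hEmax
    · intro y hy
      apply hy
      refine ⟨fun ω => ⨅ k ∈ {k : ℕ | b ≤ X k ω}, (k : ℕ∞), tauStar_st, ?_⟩
      exact (value_eq_max hXm hXpos hX0 hindep tauStar_st hident hY1 hb hα hEmax
        tauStar_up tauStar_down).symm
  · -- value attained
    have hEmax : ∫ ω, max (X 1 ω) b ∂μ = b / α :=
      emax_eq hY1 hb hα (by rw [hgb])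
    rw [max_sub_add]
    exact value_eq_max hXm hXpos hX0 hindep tauStar_st hident hY1 hb hα hEmax
      tauStar_up tauStar_down


end
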